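/- Fix an integer q ≥ 1. Let K_n, P_n be sequences of positive integers with q ≤ K_n ≤ P_n, K_n = ω(1), and K_n = o(√P_n). Define p_q(n) = Σ_{u=q}^{K_n} C(K_n,u)·C(P_n−K_n,K_n−u)/C(P_n,K_n). Then p_q(n) ~ (1/q!)·(K_n²/P_n)^q, i.e., the ratio of the two sides tends to 1 as n → ∞. -/

import Mathlib

open Filter

noncomputable section

/-- `p_q`: the key-setup probability that two independent uniformly random
`K`-subsets of a `P`-element key pool share at least `q` keys. -/
def pSetup (q K P : ℕ) : ℝ :=
  ∑ u ∈ Finset.Icc q K,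
    ((K.choose u : ℝ) * ((P - K).choose (K - u) : ℝ)) / (P.choose K : ℝ)


lemma key_identity (q K P : ℕ) (hqK : q ≤ K) :
    K.choose q * ((P - K).choose (K - q)) * (q.factorial * P.descFactorial K)
      = (K.descFactorial q) ^ 2 * ((P - K).descFactorial (K - q)) * P.choose K := by
  have h1 : (K - q).factorial * K.descFactorial q = K.factorial :=
    Nat.factorial_mul_descFactorial hqK
  have h2 : K.descFactorial q = q.factorial * K.choose q :=
    Nat.descFactorial_eq_factorial_mul_choose K q
  have h3 : (P - K).descFactorial (K - q) = (K - q).factorial * (P - K).choose (K - q) :=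
    Nat.descFactorial_eq_factorial_mul_choose _ _
  have h4 : P.descFactorial K = K.factorial * P.choose K :=
    Nat.descFactorial_eq_factorial_mul_choose _ _
  rw [h2] at h1
  rw [h3, h4, ← h1, h2]
  ring

lemma real_pow_sub_le_descFactorial (n k : ℕ) (hkn : k ≤ n) :
    ((n : ℝ) - k) ^ k ≤ (n.descFactorial k : ℝ) := by
  have h1 : ((n : ℝ) - k) = ((n - k : ℕ) : ℝ) := by
    push_cast [Nat.cast_sub hkn]; ring
  rw [h1]
  have h2 : (n - k : ℕ) ^ k ≤ n.descFactorial k := by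
    calc (n - k) ^ k ≤ (n + 1 - k) ^ k := Nat.pow_le_pow_left (by omega) k
      _ ≤ n.descFactorial k := Nat.pow_sub_le_descFactorial n k
  exact_mod_cast h2

set_option maxHeartbeats 1000000 in
/-- The main term, divided by the target, is sandwiched. -/
lemma main_term_bounds (q K P : ℕ) (hq : 1 ≤ q) (hqK : q + 1 ≤ K) (hP : 4*K^2 ≤ P) :
    (((K:ℝ) - q)/K)^(2*q) * (1 - 2*(K:ℝ)^2/P)
      ≤ (((K.choose q : ℝ) * ((P - K).choose (K - q))) / (P.choose K))
          / ((1 / (q.factorial : ℝ)) * ((K : ℝ) ^ 2 / (P : ℝ)) ^ q) ∧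
    (((K.choose q : ℝ) * ((P - K).choose (K - q))) / (P.choose K))
          / ((1 / (q.factorial : ℝ)) * ((K : ℝ) ^ 2 / (P : ℝ)) ^ q)
      ≤ ((P:ℝ)/((P:ℝ) - K))^q := by
  have hKpos : 0 < K := by omega
  have hqK' : q ≤ K := by omega
  have hKP : K ≤ P := by nlinarith
  have h2K : 2*K ≤ P := by nlinarith
  have hKqPK : K - q ≤ P - K := by omega
  have hPn : 0 < P := by nlinarith
  have hPr : (0:ℝ) < P := by exact_mod_cast hPn
  have hKr : (0:ℝ) < K := by exact_mod_cast hKpos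
  have hqr : (q:ℝ) ≤ K := by exact_mod_cast hqK'
  have h2Kr : 2*(K:ℝ) ≤ P := by exact_mod_cast h2K
  have hKrP : (K:ℝ) < P := by
    have : (4*K^2 : ℝ) ≤ P := by exact_mod_cast hP
    nlinarith
  have hfq : (0:ℝ) < (q.factorial : ℝ) := by exact_mod_cast q.factorial_pos
  have hCpos : (0:ℝ) < (P.choose K : ℝ) := by exact_mod_cast Nat.choose_pos hKP
  set a : ℝ := (K.descFactorial q : ℝ) with ha
  set b : ℝ := ((P - K).descFactorial (K - q) : ℝ) with hb
  set c : ℝ := (P.descFactorial K : ℝ) with hc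
  have hcpos : (0:ℝ) < c := by
    rw [hc]
    have : P.descFactorial K = K.factorial * P.choose K :=
      Nat.descFactorial_eq_factorial_mul_choose _ _
    rw [this]
    exact_mod_cast Nat.mul_pos K.factorial_pos (Nat.choose_pos hKP)
  -- exact value of the main term
  have hidR : (K.choose q : ℝ) * ((P - K).choose (K - q)) * ((q.factorial : ℝ) * c)
      = a ^ 2 * b * (P.choose K : ℝ) := by
    rw [ha, hb, hc]
    exact_mod_cast congrArg (Nat.cast : ℕ → ℝ) (key_identity q K P hqK')
  have hT : (0:ℝ) < (1 / (q.factorial : ℝ)) * ((K : ℝ) ^ 2 / (P : ℝ)) ^ q := by positivity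
  -- X = value of main term / target
  have hX : (((K.choose q : ℝ) * ((P - K).choose (K - q))) / (P.choose K))
        / ((1 / (q.factorial : ℝ)) * ((K : ℝ) ^ 2 / (P : ℝ)) ^ q)
      = a^2 * b * (P:ℝ)^q / (c * (K:ℝ)^(2*q)) := by
    have hNq : ((K.choose q : ℝ) * ((P - K).choose (K - q))) / (P.choose K)
        = a^2 * b / ((q.factorial : ℝ) * c) := by
      rw [div_eq_div_iff hCpos.ne' (by positivity)]
      linarith [hidR]
    rw [hNq]
    rw [div_pow, pow_mul]
    field_simp
  rw [hX]
  -- bounds on a, b, c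
  have ha_low : ((K:ℝ) - q)^q ≤ a := real_pow_sub_le_descFactorial K q hqK'
  have ha_up : a ≤ (K:ℝ)^q := by
    rw [ha]; exact_mod_cast Nat.descFactorial_le_pow K q
  have hb_up : b ≤ ((P:ℝ) - K)^(K - q) := by
    have h1 : ((P - K).descFactorial (K - q) : ℝ) ≤ (((P - K : ℕ)) : ℝ)^(K-q) := by
      exact_mod_cast Nat.descFactorial_le_pow (P - K) (K - q)
    have h2 : (((P - K : ℕ)) : ℝ) = (P:ℝ) - K := by push_cast [Nat.cast_sub hKP]; ring
    rw [hb]; rw [h2] at h1; exact h1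
  have hb_low : ((P:ℝ) - 2*K)^(K - q) ≤ b := by
    have h1 : (((P - K : ℕ) : ℝ) - ((K - q : ℕ) : ℝ))^(K - q) ≤ b :=
      real_pow_sub_le_descFactorial (P - K) (K - q) hKqPK
    have h2 : (((P - K : ℕ)) : ℝ) = (P:ℝ) - K := by push_cast [Nat.cast_sub hKP]; ring
    have h3 : (((K - q : ℕ)) : ℝ) = (K:ℝ) - q := by push_cast [Nat.cast_sub hqK']; ring
    rw [h2, h3] at h1
    refine le_trans (pow_le_pow_left₀ (by linarith) (by linarith) _) h1
  have hc_up : c ≤ (P:ℝ)^K := by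
    rw [hc]; exact_mod_cast Nat.descFactorial_le_pow P K
  have hc_low : ((P:ℝ) - K)^K ≤ c := real_pow_sub_le_descFactorial P K hKP
  -- positivity of pieces
  have hKq0 : (0:ℝ) ≤ (K:ℝ) - q := by linarith
  have hP2K0 : (0:ℝ) ≤ (P:ℝ) - 2*K := by linarith
  have hPK0 : (0:ℝ) < (P:ℝ) - K := by linarith
  have hpowsplitP : (P:ℝ)^K = (P:ℝ)^(K - q) * (P:ℝ)^q := by
    rw [← pow_add]; congr 1; omega
  have hpowsplitPK : ((P:ℝ) - K)^K = ((P:ℝ) - K)^(K - q) * ((P:ℝ) - K)^q := by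
    rw [← pow_add]; congr 1; omega
  constructor
  · -- lower bound
    have hnum : ((K:ℝ) - q)^(2*q) * ((P:ℝ) - 2*K)^(K - q) * (P:ℝ)^q ≤ a^2 * b * (P:ℝ)^q := by
      have h1 : ((K:ℝ) - q)^(2*q) ≤ a^2 := by
        rw [pow_mul, ← pow_mul, mul_comm 2 q, pow_mul]
        exact pow_le_pow_left₀ (by positivity) ha_low 2
      have h2 : ((K:ℝ) - q)^(2*q) * ((P:ℝ) - 2*K)^(K - q) ≤ a^2 * b :=
        mul_le_mul h1 hb_low (by positivity) (by positivity)
      exact mul_le_mul_of_nonneg_right h2 (by positivity)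
    have hden : c * (K:ℝ)^(2*q) ≤ (P:ℝ)^K * (K:ℝ)^(2*q) :=
      mul_le_mul_of_nonneg_right hc_up (by positivity)
    have hstep : ((K:ℝ) - q)^(2*q) * ((P:ℝ) - 2*K)^(K - q) * (P:ℝ)^q / ((P:ℝ)^K * (K:ℝ)^(2*q))
        ≤ a^2 * b * (P:ℝ)^q / (c * (K:ℝ)^(2*q)) := by
      apply div_le_div₀ (by positivity) hnum (by positivity) hden
    refine le_trans ?_ hstep
    -- remains: L ≤ explicit quotient
    have hq1 : ((K:ℝ) - q)^(2*q) * ((P:ℝ) - 2*K)^(K - q) * (P:ℝ)^q / ((P:ℝ)^K * (K:ℝ)^(2*q))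
        = (((K:ℝ) - q)/K)^(2*q) * (((P:ℝ) - 2*K)/P)^(K - q) := by
      rw [hpowsplitP, div_pow, div_pow]
      field_simp
    rw [hq1]
    apply mul_le_mul_of_nonneg_left _ (by positivity)
    -- Bernoulli: 1 - 2K^2/P ≤ ((P-2K)/P)^(K-q)
    have hbase0 : (0:ℝ) ≤ ((P:ℝ) - 2*K)/P := by positivity
    have hbase1 : ((P:ℝ) - 2*K)/P ≤ 1 := by
      rw [div_le_one hPr]; linarith
    have hmono : (((P:ℝ) - 2*K)/P)^K ≤ (((P:ℝ) - 2*K)/P)^(K - q) :=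
      pow_le_pow_of_le_one hbase0 hbase1 (Nat.sub_le K q)
    have hbern : 1 - 2*(K:ℝ)^2/P ≤ (((P:ℝ) - 2*K)/P)^K := by
      have h0 : (-2:ℝ) ≤ -(2*(K:ℝ)/P) := by
        rw [neg_le_neg_iff]
        rw [div_le_iff₀ hPr]
        nlinarith
      have h1 := one_add_mul_le_pow h0 K
      have e1 : (1 + -(2*(K:ℝ)/P)) = ((P:ℝ) - 2*K)/P := by field_simp; ring
      have e2 : 1 + (K:ℝ) * -(2*(K:ℝ)/P) = 1 - 2*(K:ℝ)^2/P := by field_simp; ring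
      rw [e1, e2] at h1
      exact h1
    linarith
  · -- upper bound
    have hnum : a^2 * b * (P:ℝ)^q ≤ (K:ℝ)^(2*q) * ((P:ℝ) - K)^(K - q) * (P:ℝ)^q := by
      have h1 : a^2 ≤ (K:ℝ)^(2*q) := by
        rw [pow_mul, ← pow_mul, mul_comm 2 q, pow_mul]
        exact pow_le_pow_left₀ (by positivity) ha_up 2
      have h2 : a^2 * b ≤ (K:ℝ)^(2*q) * ((P:ℝ) - K)^(K - q) :=
        mul_le_mul h1 hb_up (by positivity) (by positivity)
      exact mul_le_mul_of_nonneg_right h2 (by positivity)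
    have hden : ((P:ℝ) - K)^K * (K:ℝ)^(2*q) ≤ c * (K:ℝ)^(2*q) :=
      mul_le_mul_of_nonneg_right hc_low (by positivity)
    have hstep : a^2 * b * (P:ℝ)^q / (c * (K:ℝ)^(2*q))
        ≤ (K:ℝ)^(2*q) * ((P:ℝ) - K)^(K - q) * (P:ℝ)^q / (((P:ℝ) - K)^K * (K:ℝ)^(2*q)) :=
      div_le_div₀ (by positivity) hnum (by positivity) hden
    refine le_trans hstep ?_
    have hq2 : (K:ℝ)^(2*q) * ((P:ℝ) - K)^(K - q) * (P:ℝ)^q / (((P:ℝ) - K)^K * (K:ℝ)^(2*q))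
        = ((P:ℝ)/((P:ℝ) - K))^q := by
      rw [hpowsplitPK, div_pow]
      field_simp
    rw [hq2]


lemma step_identity (u K P : ℕ) (hu : u < K) :
    (K.choose (u+1) * ((P - K).choose (K - (u+1)))) * ((u+1) * ((P - K) - (K - u - 1)))
      = (K.choose u * ((P - K).choose (K - u))) * (K - u)^2 := by
  have h1 : K.choose (u+1) * (u+1) = K.choose u * (K - u) := Nat.choose_succ_right_eq K u
  have e : K - u - 1 + 1 = K - u := by omega
  have h2 : (P - K).choose (K - u - 1 + 1) * (K - u - 1 + 1)
      = (P - K).choose (K - u - 1) * ((P - K) - (K - u - 1)) :=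
    Nat.choose_succ_right_eq _ _
  rw [e] at h2
  have e2 : K - (u+1) = K - u - 1 := by omega
  rw [e2]
  calc K.choose (u+1) * (P - K).choose (K - u - 1) * ((u+1) * ((P - K) - (K - u - 1)))
      = (K.choose (u+1) * (u+1)) * ((P - K).choose (K - u - 1) * ((P - K) - (K - u - 1))) := by
        ring
    _ = (K.choose u * (K - u)) * ((P - K).choose (K - u) * (K - u)) := by rw [h1, ← h2]
    _ = K.choose u * (P - K).choose (K - u) * (K - u)^2 := by ring

set_option maxHeartbeats 1000000 in
lemma sum_sandwich (q K P : ℕ) (hq : 1 ≤ q) (hqK : q + 1 ≤ K) (hP : 4*K^2 ≤ P) :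
    ((K.choose q : ℝ) * ((P - K).choose (K - q))) / (P.choose K)
      ≤ pSetup q K P ∧
    pSetup q K P ≤ (((K.choose q : ℝ) * ((P - K).choose (K - q))) / (P.choose K))
      * (1 + 2 * (2 * (K:ℝ)^2 / P)) := by
  have hKpos : 0 < K := by omega
  have hKP : K ≤ P := by nlinarith
  have h4K : 4 * K ≤ P := by nlinarith
  have hPn : 0 < P := by nlinarith
  have hPpos : (0:ℝ) < P := by exact_mod_cast hPn
  have hCpos : (0:ℝ) < (P.choose K : ℝ) := by exact_mod_cast Nat.choose_pos hKP
  set r : ℝ := 2 * (K:ℝ)^2 / P with hr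
  have hr0 : 0 ≤ r := by positivity
  have hr2 : r ≤ 1/2 := by
    rw [hr, div_le_iff₀ hPpos]
    have : (4 * K^2 : ℝ) ≤ P := by exact_mod_cast hP
    nlinarith
  set N : ℕ → ℝ := fun u => (K.choose u : ℝ) * ((P - K).choose (K - u)) with hN
  have hNnn : ∀ u, 0 ≤ N u := fun u => by positivity
  -- step bound
  have hstep : ∀ u, N (u+1) ≤ N u * r := by
    intro u
    rcases lt_or_ge u K with hu | hu
    · have hid := step_identity u K P hu
      have hidR : N (u+1) * (((u+1 : ℕ) : ℝ) * (((P - K) - (K - u - 1) : ℕ) : ℝ))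
          = N u * (((K - u : ℕ) : ℝ))^2 := by
        show (K.choose (u+1) : ℝ) * ((P - K).choose (K - (u+1)) : ℝ)
            * (((u+1 : ℕ) : ℝ) * (((P - K) - (K - u - 1) : ℕ) : ℝ))
          = (K.choose u : ℝ) * ((P - K).choose (K - u) : ℝ) * (((K - u : ℕ) : ℝ))^2
        rw [← Nat.cast_mul, ← Nat.cast_mul, ← Nat.cast_mul, ← Nat.cast_pow, ← Nat.cast_mul,
          ← Nat.cast_mul, hid]
      have hD : (P:ℝ)/2 ≤ (((P - K) - (K - u - 1) : ℕ) : ℝ) := by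
        have h1 : P - 2*K ≤ (P - K) - (K - u - 1) := by omega
        have h2 : ((P - 2*K : ℕ) : ℝ) = (P:ℝ) - 2*K := by
          have : 2*K ≤ P := by omega
          push_cast [Nat.cast_sub this]; ring
        have h3 : ((P - 2*K : ℕ):ℝ) ≤ (((P - K) - (K - u - 1) : ℕ) : ℝ) := by exact_mod_cast h1
        have h4 : (4*K:ℝ) ≤ P := by exact_mod_cast h4K
        nlinarith
      have hKu : (((K - u : ℕ) : ℝ))^2 ≤ (K:ℝ)^2 := by
        have : ((K - u : ℕ):ℝ) ≤ (K:ℝ) := by exact_mod_cast Nat.sub_le K u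
        have : (0:ℝ) ≤ ((K - u : ℕ):ℝ) := by positivity
        nlinarith
      have hu1 : (1:ℝ) ≤ (u+1 : ℕ) := by exact_mod_cast Nat.succ_le_succ (Nat.zero_le u)
      have key : N (u+1) * ((P:ℝ)/2) ≤ N u * (K:ℝ)^2 := by
        have h5 : N (u+1) * ((P:ℝ)/2) ≤ N (u+1) * (((u+1:ℕ) : ℝ) * (((P - K) - (K - u - 1) : ℕ) : ℝ)) := by
          apply mul_le_mul_of_nonneg_left _ (hNnn _)
          have hD0 : (0:ℝ) ≤ (((P - K) - (K - u - 1) : ℕ) : ℝ) := by positivity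
          nlinarith
        calc N (u+1) * ((P:ℝ)/2) ≤ _ := h5
          _ = N u * (((K - u : ℕ) : ℝ))^2 := hidR
          _ ≤ N u * (K:ℝ)^2 := mul_le_mul_of_nonneg_left hKu (hNnn u)
      rw [hr, ← mul_div_assoc, le_div_iff₀ hPpos]
      linarith
    · have : K.choose (u+1) = 0 := Nat.choose_eq_zero_of_lt (by omega)
      have hz : N (u+1) = 0 := by rw [hN]; simp [this]
      rw [hz]; positivity
  have hgeo : ∀ i, N (q + i) ≤ N q * r ^ i := by
    intro i
    induction i with
    | zero => simp
    | succ i ih =>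
      have := hstep (q + i)
      calc N (q + (i+1)) = N ((q+i)+1) := by ring_nf
        _ ≤ N (q+i) * r := hstep (q+i)
        _ ≤ (N q * r ^ i) * r := mul_le_mul_of_nonneg_right ih hr0
        _ = N q * r ^ (i+1) := by ring
  -- rewrite pSetup as sum over range
  have hps : pSetup q K P = (∑ i ∈ Finset.range (K + 1 - q), N (q + i)) / (P.choose K : ℝ) := by
    rw [pSetup, ← Finset.sum_div, ← Finset.Ico_add_one_right_eq_Icc, Finset.sum_Ico_eq_sum_range]
  constructor
  · rw [pSetup]
    have hmem : q ∈ Finset.Icc q K := by simp; omega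
    exact Finset.single_le_sum (f := fun u =>
      ((K.choose u : ℝ) * ((P - K).choose (K - u) : ℝ)) / (P.choose K : ℝ))
      (fun u _ => by positivity) hmem
  · rw [hps]
    have hsum : (∑ i ∈ Finset.range (K + 1 - q), N (q + i)) ≤ N q * (1 + 2*r) := by
      calc (∑ i ∈ Finset.range (K + 1 - q), N (q + i))
          ≤ ∑ i ∈ Finset.range (K + 1 - q), N q * r ^ i :=
            Finset.sum_le_sum (fun i _ => hgeo i)
        _ = N q * ∑ i ∈ Finset.range (K + 1 - q), r ^ i := by rw [Finset.mul_sum]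
        _ ≤ N q * (1 + 2*r) := by
            apply mul_le_mul_of_nonneg_left _ (hNnn q)
            have hrne : r ≠ 1 := by linarith
            rw [geom_sum_eq hrne]
            rw [div_le_iff_of_neg (by linarith : r - 1 < 0)]
            have : (0:ℝ) ≤ r ^ (K + 1 - q) := by positivity
            nlinarith
    have heq : N q / (P.choose K : ℝ) * (1 + 2*r) = (N q * (1 + 2*r)) / (P.choose K : ℝ) := by
      ring
    rw [heq, div_le_div_iff_of_pos_right hCpos]
    exact hsum


/-- Asymptotics of the key-setup probability:
`p_q(n) ~ (1/q!)·(K_n²/P_n)^q` when `K_n = ω(1)` and `K_n = o(√P_n)`. -/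
theorem pSetup_asymptotics
    (q : ℕ) (hq : 1 ≤ q)
    (K P : ℕ → ℕ)
    (hqK : ∀ n, q ≤ K n) (hKP : ∀ n, K n ≤ P n) (hPpos : ∀ n, 0 < P n)
    (hKomega : Tendsto (fun n => (K n : ℝ)) atTop atTop)
    (hKsqrt : Tendsto (fun n => (K n : ℝ) / Real.sqrt ((P n : ℝ))) atTop (nhds 0)) :
    Tendsto
      (fun n => pSetup q (K n) (P n) /
        ((1 / (q.factorial : ℝ)) * ((K n : ℝ) ^ 2 / (P n : ℝ)) ^ q))
      atTop (nhds 1) := by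
  -- K^2/P → 0
  have hKsq : Tendsto (fun n => (K n : ℝ)^2 / (P n : ℝ)) atTop (nhds 0) := by
    have h1 : Tendsto (fun n => ((K n : ℝ) / Real.sqrt (P n))^2) atTop (nhds 0) := by
      have := hKsqrt.pow 2
      simpa using this
    refine h1.congr (fun n => ?_)
    rw [div_pow, Real.sq_sqrt (by positivity : (0:ℝ) ≤ (P n : ℝ))]
  have hr : Tendsto (fun n => 2 * (K n : ℝ)^2 / (P n : ℝ)) atTop (nhds 0) := by
    have := hKsq.const_mul 2
    simp only [mul_zero] at this
    refine this.congr (fun n => ?_)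
    ring
  -- K/P → 0
  have hKoverP : Tendsto (fun n => (K n : ℝ) / (P n : ℝ)) atTop (nhds 0) := by
    apply tendsto_of_tendsto_of_tendsto_of_le_of_le' tendsto_const_nhds hKsq
    · exact Eventually.of_forall (fun n => by positivity)
    · filter_upwards [hKomega.eventually_ge_atTop 1] with n hn
      have hP0 : (0:ℝ) < P n := by exact_mod_cast hPpos n
      have : (K n : ℝ) ≤ (K n : ℝ)^2 := by nlinarith
      exact div_le_div_of_nonneg_right this hP0.le
  -- q / K → 0
  have hqoverK : Tendsto (fun n => (q : ℝ) / (K n : ℝ)) atTop (nhds 0) :=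
    tendsto_const_nhds.div_atTop hKomega
  -- lower sequence tends to 1
  have hL : Tendsto (fun n => (((K n:ℝ) - q)/(K n))^(2*q) * (1 - 2*(K n:ℝ)^2/(P n)))
      atTop (nhds 1) := by
    have h1 : Tendsto (fun n => ((K n:ℝ) - q)/(K n)) atTop (nhds 1) := by
      have h2 : Tendsto (fun n => 1 - (q:ℝ)/(K n)) atTop (nhds 1) := by
        have := (tendsto_const_nhds : Tendsto (fun _ : ℕ => (1:ℝ)) atTop (nhds 1)) |>.sub hqoverK
        simpa using this
      apply h2.congr'
      filter_upwards [hKomega.eventually_ge_atTop 1] with n hn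
      have hK0 : (K n : ℝ) ≠ 0 := by linarith
      field_simp
    have h3 : Tendsto (fun n => (((K n:ℝ) - q)/(K n))^(2*q)) atTop (nhds 1) := by
      have := h1.pow (2*q)
      simpa using this
    have h4 : Tendsto (fun n => 1 - 2*(K n:ℝ)^2/(P n)) atTop (nhds 1) := by
      have := (tendsto_const_nhds : Tendsto (fun _ : ℕ => (1:ℝ)) atTop (nhds 1)) |>.sub hr
      simpa using this
    have := h3.mul h4
    simpa using this
  -- upper sequence tends to 1
  have hU : Tendsto (fun n => ((P n:ℝ)/((P n:ℝ) - K n))^q * (1 + 2*(2*(K n:ℝ)^2/(P n))))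
      atTop (nhds 1) := by
    have h1 : Tendsto (fun n => (P n:ℝ)/((P n:ℝ) - K n)) atTop (nhds 1) := by
      have h2 : Tendsto (fun n => (1:ℝ) - (K n:ℝ)/(P n)) atTop (nhds 1) := by
        have := (tendsto_const_nhds : Tendsto (fun _ : ℕ => (1:ℝ)) atTop (nhds 1)) |>.sub hKoverP
        simpa using this
      have h3 : Tendsto (fun n => 1/((1:ℝ) - (K n:ℝ)/(P n))) atTop (nhds 1) := by
        have := h2.inv₀ (by norm_num)
        simpa using this
      apply h3.congr (fun n => ?_)
      have hP0 : (0:ℝ) < P n := by exact_mod_cast hPpos n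
      rw [one_sub_div hP0.ne', one_div_div]
    have h3 : Tendsto (fun n => ((P n:ℝ)/((P n:ℝ) - K n))^q) atTop (nhds 1) := by
      have := h1.pow q
      simpa using this
    have h4 : Tendsto (fun n => 1 + 2*(2*(K n:ℝ)^2/(P n))) atTop (nhds 1) := by
      have h5 := hr.const_mul 2
      simp only [mul_zero] at h5
      have := (tendsto_const_nhds : Tendsto (fun _ : ℕ => (1:ℝ)) atTop (nhds 1)) |>.add h5
      simpa using this
    have := h3.mul h4
    simpa using this
  -- eventually the hypotheses of the bound lemmas hold
  have hEv : ∀ᶠ n in atTop, q + 1 ≤ K n ∧ 4 * (K n)^2 ≤ P n := by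
    have e1 : ∀ᶠ n in atTop, ((q:ℝ) + 1) ≤ (K n : ℝ) := hKomega.eventually_ge_atTop _
    have e2 : ∀ᶠ n in atTop, (K n : ℝ)^2 / (P n : ℝ) < 1/4 :=
      hKsq.eventually (eventually_lt_nhds (by norm_num))
    filter_upwards [e1, e2] with n h1 h2
    constructor
    · exact_mod_cast h1
    · have hP0 : (0:ℝ) < P n := by exact_mod_cast hPpos n
      rw [div_lt_iff₀ hP0] at h2
      have : (4 * (K n)^2 : ℝ) ≤ (P n : ℝ) := by nlinarith
      exact_mod_cast this
  -- final squeeze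
  apply tendsto_of_tendsto_of_tendsto_of_le_of_le' hL hU
  · filter_upwards [hEv] with n hn
    have hb := (main_term_bounds q (K n) (P n) hq hn.1 hn.2).1
    have hs := (sum_sandwich q (K n) (P n) hq hn.1 hn.2).1
    have hT : (0:ℝ) < (1 / (q.factorial : ℝ)) * ((K n : ℝ) ^ 2 / (P n : ℝ)) ^ q := by
      have hP0 : (0:ℝ) < P n := by exact_mod_cast hPpos n
      have hK0 : (0:ℝ) < K n := by
        have : 1 ≤ K n := by omega
        exact_mod_cast this
      have hf : (0:ℝ) < (q.factorial : ℝ) := by exact_mod_cast q.factorial_pos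
      positivity
    refine le_trans hb ?_
    exact (div_le_div_iff_of_pos_right hT).mpr hs
  · filter_upwards [hEv] with n hn
    have hb := (main_term_bounds q (K n) (P n) hq hn.1 hn.2).2
    have hs := (sum_sandwich q (K n) (P n) hq hn.1 hn.2).2
    have hT : (0:ℝ) < (1 / (q.factorial : ℝ)) * ((K n : ℝ) ^ 2 / (P n : ℝ)) ^ q := by
      have hP0 : (0:ℝ) < P n := by exact_mod_cast hPpos n
      have hK0 : (0:ℝ) < K n := by
        have : 1 ≤ K n := by omega
        exact_mod_cast this
      have hf : (0:ℝ) < (q.factorial : ℝ) := by exact_mod_cast q.factorial_pos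
      positivity
    have hr0 : (0:ℝ) ≤ 1 + 2 * (2 * (K n:ℝ)^2 / (P n)) := by
      have hP0 : (0:ℝ) < P n := by exact_mod_cast hPpos n
      positivity
    calc pSetup q (K n) (P n) / ((1 / (q.factorial : ℝ)) * ((K n : ℝ) ^ 2 / (P n : ℝ)) ^ q)
        ≤ (((K n).choose q : ℝ) * (((P n) - (K n)).choose ((K n) - q)) / ((P n).choose (K n))
            * (1 + 2 * (2 * (K n:ℝ)^2 / (P n))))
          / ((1 / (q.factorial : ℝ)) * ((K n : ℝ) ^ 2 / (P n : ℝ)) ^ q) :=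
          (div_le_div_iff_of_pos_right hT).mpr hs
      _ = (((K n).choose q : ℝ) * (((P n) - (K n)).choose ((K n) - q)) / ((P n).choose (K n))
            / ((1 / (q.factorial : ℝ)) * ((K n : ℝ) ^ 2 / (P n : ℝ)) ^ q))
          * (1 + 2 * (2 * (K n:ℝ)^2 / (P n))) := mul_div_right_comm _ _ _
      _ ≤ ((P n:ℝ)/((P n:ℝ) - K n))^q * (1 + 2*(2*(K n:ℝ)^2/(P n))) :=
          mul_le_mul_of_nonneg_right hb hr0
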